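/- For n ≥ 3, there exists a 4-coloring of 2^[n] with no rainbow induced copy of the diamond D₂ in which every color class has size exactly 2^(n-2). -/

import Mathlib

open Finset

namespace Stmt8Aux

def g (P : Finset (Fin 3)) : Fin 4 :=
  if P = {0} ∨ P = {0,1} then 0
  else if P = {1} ∨ P = {1,2} then 1
  else if P = {2} ∨ P = {0,2} then 2
  else 3

lemma key : ∀ pA pB pC pD : Finset (Fin 3), pA ⊆ pB → pA ⊆ pC → pB ⊆ pD → pC ⊆ pD →
    g pA = g pB ∨ g pA = g pC ∨ g pA = g pD ∨ g pB = g pC ∨ g pB = g pD ∨ g pC = g pD := by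
  decide

lemma gcount : ∀ i : Fin 4, (Finset.univ.filter fun P : Finset (Fin 3) => g P = i).card = 2 := by
  decide

variable {n : ℕ} (hn : 3 ≤ n)

def proj (hn : 3 ≤ n) (F : Finset (Fin n)) : Finset (Fin 3) :=
  Finset.univ.filter fun i => Fin.castLE hn i ∈ F

lemma proj_mono {F F' : Finset (Fin n)} (h : F ⊆ F') : proj hn F ⊆ proj hn F' := by
  intro i hi
  simp only [proj, mem_filter, mem_univ, true_and] at hi ⊢
  exact h hi

lemma card_lt3 (hn : 3 ≤ n) : (Finset.univ.filter fun j : Fin n => j.val < 3).card = 3 := by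
  have : (Finset.univ.filter fun j : Fin n => j.val < 3)
      = (Finset.univ : Finset (Fin 3)).map (Fin.castLEEmb hn) := by
    ext j
    simp only [mem_filter, mem_univ, true_and, mem_map, Fin.castLEEmb_apply]
    constructor
    · intro h
      exact ⟨⟨j.1, h⟩, by simp [Fin.ext_iff]⟩
    · rintro ⟨i, rfl⟩
      exact i.2
  rw [this, Finset.card_map]
  simp

lemma fiber_card (P₀ : Finset (Fin 3)) :
    (Finset.univ.filter fun F : Finset (Fin n) => proj hn F = P₀).card = 2 ^ (n - 3) := by
  classical
  set s : Finset (Fin n) := Finset.univ.filter fun j => ¬ j.val < 3 with hs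
  have hscard : s.card = n - 3 := by
    have h1 := Finset.card_filter_add_card_filter_not
      (s := (Finset.univ : Finset (Fin n))) (p := fun j : Fin n => j.val < 3)
    rw [Finset.card_univ, Fintype.card_fin, card_lt3 hn, ← hs] at h1
    omega
  have hbij : (Finset.univ.filter fun F : Finset (Fin n) => proj hn F = P₀).card
      = s.powerset.card := by
    apply Finset.card_bij' (fun F _ => F.filter fun j => ¬ j.val < 3)
      (fun G _ => G ∪ P₀.map (Fin.castLEEmb hn))
    · intro F hF
      rw [Finset.mem_powerset]
      intro j hj
      rw [Finset.mem_filter] at hj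
      simp only [hs, mem_filter, mem_univ, true_and]
      exact hj.2
    · intro G hG
      rw [Finset.mem_powerset] at hG
      simp only [mem_filter, mem_univ, true_and]
      ext i
      simp only [proj, mem_filter, mem_univ, true_and, Finset.mem_union, mem_map,
        Fin.castLEEmb_apply]
      constructor
      · rintro (h | ⟨i', hi', hii⟩)
        · exfalso
          have := hG h
          simp only [hs, mem_filter] at this
          exact this.2 (by simp [Fin.castLE])
        · have : i' = i := by
            rwa [Fin.ext_iff] at hii ⊢
          rwa [← this]
      · intro h
        exact Or.inr ⟨i, h, rfl⟩
    · intro F hF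
      simp only [mem_filter, mem_univ, true_and] at hF
      ext j
      simp only [Finset.mem_union, mem_filter, mem_map, Fin.castLEEmb_apply]
      by_cases hj3 : j.val < 3
      · constructor
        · rintro (⟨h, hh⟩ | ⟨i, hi, rfl⟩)
          · exact absurd hj3 hh
          · rw [← hF] at hi
            simp only [proj, mem_filter, mem_univ, true_and] at hi
            exact hi
        · intro hjF
          refine Or.inr ⟨⟨j.1, hj3⟩, ?_, by simp [Fin.ext_iff]⟩
          rw [← hF]
          simp only [proj, mem_filter, mem_univ, true_and]
          have : Fin.castLE hn ⟨j.1, hj3⟩ = j := by simp [Fin.ext_iff]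
          rwa [this]
      · constructor
        · rintro (⟨h, _⟩ | ⟨i, hi, rfl⟩)
          · exact h
          · exact absurd i.2 hj3
        · intro h
          exact Or.inl ⟨h, hj3⟩
    · intro G hG
      rw [Finset.mem_powerset] at hG
      ext j
      simp only [mem_filter, Finset.mem_union, mem_map, Fin.castLEEmb_apply]
      constructor
      · rintro ⟨h | ⟨i, hi, rfl⟩, hj3⟩
        · exact h
        · exact absurd i.2 hj3
      · intro h
        have := hG h
        simp only [hs, mem_filter] at this
        exact ⟨Or.inl h, this.2⟩
  rw [hbij, Finset.card_powerset, hscard]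

end Stmt8Aux

theorem stmt8 (n : ℕ) (hn : 3 ≤ n) :
    ∃ c : Finset (Fin n) → Fin 4,
      (¬∃ A B C D : Finset (Fin n), A ⊂ B ∧ A ⊂ C ∧ B ⊂ D ∧ C ⊂ D ∧ ¬B ⊆ C ∧ ¬C ⊆ B ∧
        c A ≠ c B ∧ c A ≠ c C ∧ c A ≠ c D ∧ c B ≠ c C ∧ c B ≠ c D ∧ c C ≠ c D) ∧
      ∀ i : Fin 4,
        (Finset.univ.filter fun F : Finset (Fin n) => c F = i).card = 2 ^ (n - 2) := by
  classical
  open Stmt8Aux in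
  refine ⟨fun F => g (proj hn F), ?_, ?_⟩
  · rintro ⟨A, B, C, D, hAB, hAC, hBD, hCD, _, _, h1, h2, h3, h4, h5, h6⟩
    rcases key (proj hn A) (proj hn B) (proj hn C) (proj hn D)
      (proj_mono hn hAB.subset) (proj_mono hn hAC.subset)
      (proj_mono hn hBD.subset) (proj_mono hn hCD.subset) with h | h | h | h | h | h
    · exact h1 h
    · exact h2 h
    · exact h3 h
    · exact h4 h
    · exact h5 h
    · exact h6 h
  · intro i
    have hsplit : (Finset.univ.filter fun F : Finset (Fin n) => g (proj hn F) = i)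
        = (Finset.univ.filter fun P : Finset (Fin 3) => g P = i).biUnion
          (fun P₀ => Finset.univ.filter fun F : Finset (Fin n) => proj hn F = P₀) := by
      ext F
      simp only [mem_filter, mem_univ, true_and, Finset.mem_biUnion]
      constructor
      · intro h
        exact ⟨proj hn F, by simp [h], by simp⟩
      · rintro ⟨P₀, hP₀, h⟩
        rw [h]; exact hP₀
    rw [hsplit, Finset.card_biUnion]
    · rw [Finset.sum_congr rfl (fun P₀ _ => fiber_card hn P₀), Finset.sum_const,
        gcount i, smul_eq_mul]
      have : n - 2 = (n - 3) + 1 := by omega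
      rw [this, pow_succ]
      ring
    · intro P₁ h₁ P₂ h₂ hne
      rw [Function.onFun, Finset.disjoint_left]
      intro F hF hF2
      simp only [mem_filter, mem_univ, true_and] at hF hF2
      exact hne (hF ▸ hF2 ▸ rfl)
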